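/- Let f : R^d → R be twice differentiable with H-Lipschitz Hessian in spectral norm, with minimizer x* where ∇f(x*) = 0 and ∇²f(x*) ⪰ μI, μ > 0. Let H^k ∈ R^{d×d} and let [H^k]_μ denote the projection of H^k onto the set of symmetric matrices M with M ⪰ μI (so [H^k]_μ ⪰ μI). Then the iterate x^{k+1} = x^k − [H^k]_μ^{-1} ∇f(x^k) satisfies ‖x^{k+1} − x*‖² ≤ (2/μ²)‖x^k − x*‖² (‖H^k − ∇²f(x*)‖² + (H²/4)‖x^k − x*‖²). -/

import Mathlib

open scoped RealInnerProductSpace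

open Set

lemma taylor_remainder {E : Type*} [NormedAddCommGroup E] [NormedSpace ℝ E]
    (g : E → E) (Hess : E → (E →L[ℝ] E)) (H : ℝ)
    (hHess : ∀ x, HasFDerivAt g (Hess x) x)
    (hLip : ∀ x y, ‖Hess x - Hess y‖ ≤ H * ‖x - y‖) (x y : E) :
    ‖g x - g y - Hess y (x - y)‖ ≤ H / 2 * ‖x - y‖ ^ 2 := by
  set v := x - y with hv
  set φ : ℝ → E := fun t => g (y + t • v) - g y - t • (Hess y v) with hφ
  have hline : ∀ t : ℝ, HasDerivAt (fun t : ℝ => y + t • v) v t := by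
    intro t
    simpa using ((hasDerivAt_id t).smul_const v).const_add y
  have hφ' : ∀ t : ℝ, HasDerivAt φ (((Hess (y + t • v)) - Hess y) v) t := by
    intro t
    have h1 : HasDerivAt (fun t : ℝ => g (y + t • v)) (Hess (y + t • v) v) t := by
      exact (hHess (y + t • v)).comp_hasDerivAt t (hline t)
    have h2 : HasDerivAt (fun t : ℝ => t • (Hess y v)) (Hess y v) t := by
      simpa using (hasDerivAt_id t).smul_const (Hess y v)
    simpa [φ, ContinuousLinearMap.sub_apply, Pi.sub_def] using (h1.sub_const (g y)).sub h2
  have key : ∀ t ∈ Icc (0:ℝ) 1, ‖φ t‖ ≤ H * ‖v‖ ^ 2 * t ^ 2 / 2 := by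
    intro t ht
    refine image_norm_le_of_norm_deriv_right_le_deriv_boundary
      (f := φ) (f' := fun t => ((Hess (y + t • v)) - Hess y) v)
      (a := 0) (b := 1)
      (B := fun t => H * ‖v‖ ^ 2 * t ^ 2 / 2) (B' := fun t => H * ‖v‖ ^ 2 * t)
      ?_ ?_ ?_ ?_ ?_ ht
    · exact fun s _ => (hφ' s).continuousAt.continuousWithinAt
    · exact fun s _ => (hφ' s).hasDerivWithinAt
    · simp [φ]
    · intro s
      have : HasDerivAt (fun t : ℝ => H * ‖v‖ ^ 2 * t ^ 2 / 2)
          (H * ‖v‖ ^ 2 * (2 * s) / 2) s := by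
        exact (((hasDerivAt_pow 2 s).const_mul (H * ‖v‖ ^ 2)).div_const 2).congr_deriv (by ring_nf)
      simpa using this.congr_deriv (by ring)
    · intro s hs
      have h1 : ‖((Hess (y + s • v)) - Hess y) v‖ ≤ ‖Hess (y + s • v) - Hess y‖ * ‖v‖ :=
        (Hess (y + s • v) - Hess y).le_opNorm v
      have h2 : ‖Hess (y + s • v) - Hess y‖ ≤ H * ‖s • v‖ := by
        simpa using hLip (y + s • v) y
      have h3 : ‖s • v‖ = s * ‖v‖ := by
        rw [norm_smul, Real.norm_eq_abs, abs_of_nonneg hs.1]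
      calc ‖((Hess (y + s • v)) - Hess y) v‖ ≤ H * (s * ‖v‖) * ‖v‖ := by
            refine h1.trans (mul_le_mul_of_nonneg_right ?_ (norm_nonneg _))
            rw [← h3] ; exact h2
        _ = H * ‖v‖ ^ 2 * s := by ring
  have := key 1 (by norm_num)
  have hyx : y + v = x := by rw [hv]; abel
  have hφ1 : φ 1 = g x - g y - Hess y v := by simp [φ, hyx]
  rw [hφ1] at this
  calc ‖g x - g y - Hess y (x - y)‖ = ‖g x - g y - Hess y v‖ := by rw [hv]
    _ ≤ H * ‖v‖ ^ 2 * 1 ^ 2 / 2 := this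
    _ = H / 2 * ‖x - y‖ ^ 2 := by rw [hv]; ring

/-- one step of FedNL (Option 1) with the projected Hessian estimate
`P = [H^k]_μ`.  The projection is encoded by its defining properties: `P ⪰ μI` and
`‖P − ∇²f(x*)‖ ≤ ‖H^k − ∇²f(x*)‖` (the projection is a contraction towards any symmetric
matrix `⪰ μI`). -/
theorem fednl_option1_one_step {d : ℕ}
    (f : EuclideanSpace ℝ (Fin d) → ℝ)
    (g : EuclideanSpace ℝ (Fin d) → EuclideanSpace ℝ (Fin d))
    (Hess : EuclideanSpace ℝ (Fin d) →
      (EuclideanSpace ℝ (Fin d) →L[ℝ] EuclideanSpace ℝ (Fin d)))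
    (H μ : ℝ) (hμ : 0 < μ) (xstar : EuclideanSpace ℝ (Fin d))
    (hgrad : ∀ x, HasGradientAt f (g x) x)
    (hHess : ∀ x, HasFDerivAt g (Hess x) x)
    (hLip : ∀ x y, ‖Hess x - Hess y‖ ≤ H * ‖x - y‖)
    (hpos : ∀ v, μ * ‖v‖ ^ 2 ≤ ⟪Hess xstar v, v⟫)
    (hstar : g xstar = 0)
    (Hk P : EuclideanSpace ℝ (Fin d) →L[ℝ] EuclideanSpace ℝ (Fin d))
    (hPpos : ∀ v, μ * ‖v‖ ^ 2 ≤ ⟪P v, v⟫)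
    (hPproj : ‖P - Hess xstar‖ ≤ ‖Hk - Hess xstar‖)
    (Pinv : EuclideanSpace ℝ (Fin d) →L[ℝ] EuclideanSpace ℝ (Fin d))
    (hinv1 : Pinv.comp P = ContinuousLinearMap.id ℝ _)
    (hinv2 : P.comp Pinv = ContinuousLinearMap.id ℝ _)
    (xk xnext : EuclideanSpace ℝ (Fin d))
    (hiter : xnext = xk - Pinv (g xk)) :
    ‖xnext - xstar‖ ^ 2 ≤ 2 / μ ^ 2 * ‖xk - xstar‖ ^ 2 *
      (‖Hk - Hess xstar‖ ^ 2 + H ^ 2 / 4 * ‖xk - xstar‖ ^ 2) := by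
  set e := xk - xstar with he
  set w := xnext - xstar with hwdef
  have hPinv : P (Pinv (g xk)) = g xk := by
    have := congrArg (fun T : EuclideanSpace ℝ (Fin d) →L[ℝ] EuclideanSpace ℝ (Fin d) =>
      T (g xk)) hinv2
    simpa using this
  have hw : P w = (P - Hess xstar) e - (g xk - g xstar - Hess xstar e) := by
    rw [hwdef, he, hiter]
    simp only [map_sub, hPinv, ContinuousLinearMap.sub_apply, hstar]
    abel
  have htay : ‖g xk - g xstar - Hess xstar e‖ ≤ H / 2 * ‖e‖ ^ 2 := by
    rw [he]
    exact taylor_remainder g Hess H hHess hLip xk xstar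
  have hPw : ‖P w‖ ≤ ‖Hk - Hess xstar‖ * ‖e‖ + H / 2 * ‖e‖ ^ 2 := by
    rw [hw]
    refine (norm_sub_le _ _).trans (add_le_add ?_ htay)
    exact ((P - Hess xstar).le_opNorm e).trans
      (mul_le_mul_of_nonneg_right hPproj (norm_nonneg _))
  have hμw : μ * ‖w‖ ≤ ‖P w‖ := by
    rcases eq_or_ne w 0 with h | h
    · simp [h]
    · have h1 : μ * ‖w‖ ^ 2 ≤ ⟪P w, w⟫ := hPpos w
      have h2 : ⟪P w, w⟫ ≤ ‖P w‖ * ‖w‖ := real_inner_le_norm _ _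
      have h3 : 0 < ‖w‖ := norm_pos_iff.mpr h
      nlinarith
  have ha : (0:ℝ) ≤ ‖Hk - Hess xstar‖ * ‖e‖ :=
    mul_nonneg (norm_nonneg _) (norm_nonneg _)
  have hb : (0:ℝ) ≤ μ * ‖w‖ := mul_nonneg hμ.le (norm_nonneg _)
  have hsq : (μ * ‖w‖) ^ 2 ≤ (‖Hk - Hess xstar‖ * ‖e‖ + H / 2 * ‖e‖ ^ 2) ^ 2 := by
    have := hμw.trans hPw
    nlinarith
  have hμ2 : (0:ℝ) < μ ^ 2 := by positivity
  rw [show 2 / μ ^ 2 * ‖e‖ ^ 2 * (‖Hk - Hess xstar‖ ^ 2 + H ^ 2 / 4 * ‖e‖ ^ 2)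
      = (2 * ‖e‖ ^ 2 * (‖Hk - Hess xstar‖ ^ 2 + H ^ 2 / 4 * ‖e‖ ^ 2)) / μ ^ 2 from by
        ring, le_div_iff₀ hμ2]
  nlinarith [sq_nonneg (‖Hk - Hess xstar‖ * ‖e‖ - H / 2 * ‖e‖ ^ 2)]
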